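/- Let Φ' be the two-group (interchangeable-robot) version of the MPP instance reduced from a 3SAT instance (X, C) with n variables and m clauses (as described in the context), where the variable robots {r_{x_1}, …, r_{x_n}} form one group with goal set {v_{x_1}^g, …, v_{x_n}^g} and the clause robots {r_{c_1}, …, r_{c_m}} form another group with goal set {v_{c_1}^g, …, v_{c_m}^g}. Then Φ' admits a solution with makespan at most m+2 if and only if (X, C) is satisfiable, and Φ' admits a solution with total arrival time at most (n+m)(m+2) if and only if (X, C) is satisfiable. -/

import Mathlib

/-!
Formalization of multi-robot path planning on graphs (MPP).

An MPP instance consists of a connected simple graph `G` on a vertex type `V`,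
a finite set of robots (an index type `R`), and injective start/goal
configurations `xI xG : R → V`.  A scheduled path is a map `ℕ → V`.
-/

namespace MPPFormal

variable {V R : Type}

/-- The arrival time of a path `p` with goal `g`: the smallest time `t`
with `p t = g`. -/
noncomputable def arrivalTime (g : V) (p : ℕ → V) : ℕ := sInf {t | p t = g}

/-- A feasible scheduled path from `s` to `g` in the graph `G`:
it starts at `s`, reaches `g` at some time, stays at `g` forever after the
first time it reaches `g`, and at every time step it either traverses an
edge of `G` or stays put. -/
def FeasiblePath (G : SimpleGraph V) (s g : V) (p : ℕ → V) : Prop :=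
  p 0 = s ∧ (∃ t, p t = g) ∧ (∀ t, arrivalTime g p ≤ t → p t = g) ∧
    ∀ t, G.Adj (p t) (p (t + 1)) ∨ p t = p (t + 1)

/-- Two scheduled paths collide if they meet at the same vertex at the same
time, or if they swap along an edge head-on. -/
def Collide (p q : ℕ → V) : Prop :=
  (∃ t, p t = q t) ∨ ∃ t, p t = q (t + 1) ∧ p (t + 1) = q t ∧ p t ≠ p (t + 1)

/-- The length of a scheduled path: the number of time steps at which it
actually moves. -/
noncomputable def pathLen (p : ℕ → V) : ℕ := Set.ncard {t | p t ≠ p (t + 1)}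

/-- A solution to the MPP instance `(G, R, xI, xG)`: a family of pairwise
non-colliding feasible paths, one per robot. -/
def IsSolution (G : SimpleGraph V) (xI xG : R → V) (p : R → ℕ → V) : Prop :=
  (∀ i, FeasiblePath G (xI i) (xG i) (p i)) ∧
    Pairwise fun i j => ¬ Collide (p i) (p j)

/-- `(G, xI, xG)` together with the robot index type `R` forms an MPP
instance: the graph is connected and the start and goal configurations are
injective. -/
def IsMPPInstance (G : SimpleGraph V) (xI xG : R → V) : Prop :=
  G.Connected ∧ Function.Injective xI ∧ Function.Injective xG

variable [Fintype R]

/-- Total arrival time of a solution. -/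
noncomputable def totalTime (xG : R → V) (p : R → ℕ → V) : ℕ :=
  ∑ i, arrivalTime (xG i) (p i)

/-- Makespan (last arrival time) of a solution. -/
noncomputable def makespan (xG : R → V) (p : R → ℕ → V) : ℕ :=
  Finset.univ.sup fun i => arrivalTime (xG i) (p i)

/-- Total distance traveled in a solution. -/
noncomputable def totalDist (p : R → ℕ → V) : ℕ := ∑ i, pathLen (p i)

/-- Maximum single-robot distance of a solution. -/
noncomputable def maxDist (p : R → ℕ → V) : ℕ :=
  Finset.univ.sup fun i => pathLen (p i)

/-- Minimum total arrival time over all solutions. -/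
noncomputable def minTotalTime (G : SimpleGraph V) (xI xG : R → V) : ℕ :=
  sInf {c | ∃ p, IsSolution G xI xG p ∧ totalTime xG p = c}

/-- Minimum makespan over all solutions. -/
noncomputable def minMakespan (G : SimpleGraph V) (xI xG : R → V) : ℕ :=
  sInf {c | ∃ p, IsSolution G xI xG p ∧ makespan xG p = c}

/-- Minimum total distance over all solutions. -/
noncomputable def minTotalDist (G : SimpleGraph V) (xI xG : R → V) : ℕ :=
  sInf {c | ∃ p, IsSolution G xI xG p ∧ totalDist p = c}

/-- Minimum maximum distance over all solutions. -/
noncomputable def minMaxDist (G : SimpleGraph V) (xI xG : R → V) : ℕ :=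
  sInf {c | ∃ p, IsSolution G xI xG p ∧ maxDist p = c}

end MPPFormal

/-!
The reduction from 3SAT to MPP.

A 3SAT instance over `n` variables with `m` clauses assigns to each clause
`j : Fin m` three literals; a literal is a pair `(i, b) : Fin n × Bool`,
`b = true` meaning the non-negated variable `x_i` and `b = false` the
negated literal `¬ x_i`.  The three literals of each clause involve three
distinct variables.
-/

namespace MPPFormal

/-- A 3SAT instance with variables `x_1, …, x_n` and clauses `c_1, …, c_m`. -/
structure ThreeSat (n m : ℕ) where
  lit : Fin m → Fin 3 → Fin n × Bool
  distinctVars : ∀ j (k k' : Fin 3), k ≠ k' → (lit j k).1 ≠ (lit j k').1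

/-- An assignment `a` satisfies the instance if every clause contains a true
literal. -/
def ThreeSat.SatisfiedBy {n m : ℕ} (sat : ThreeSat n m) (a : Fin n → Bool) : Prop :=
  ∀ j, ∃ k, a (sat.lit j k).1 = (sat.lit j k).2

/-- Satisfiability of a 3SAT instance. -/
def ThreeSat.Satisfiable {n m : ℕ} (sat : ThreeSat n m) : Prop :=
  ∃ a, sat.SatisfiedBy a

/-- Vertices of the MPP instance `Φ` reduced from a 3SAT instance with `n`
variables and `m` clauses:
* `vx i` is the left endpoint `v_{x_i}` of the `i`-th variable strip (start of
  the variable robot `r_{x_i}`);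
* `vxg i` is the right endpoint `v_{x_i}^g` (goal of `r_{x_i}`);
* `mid i side k` is the interior vertex of the `i`-th upper (`side = true`)
  or lower (`side = false`) path lying at distance `k + 1` from `vx i`
  (each of the two paths has length `m + 2`, hence `m + 1` interior
  vertices, `k : Fin (m+1)`);
* `vc j` is the start vertex `v_{c_j}` of the clause robot `r_{c_j}`;
* `vcg j` is its goal vertex `v_{c_j}^g`. -/
inductive PhiV (n m : ℕ) where
  | vx (i : Fin n)
  | vxg (i : Fin n)
  | mid (i : Fin n) (side : Bool) (k : Fin (m + 1))
  | vc (j : Fin m)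
  | vcg (j : Fin m)
deriving DecidableEq

/-- Base relation generating the edges of `Φ`:
the two length-`(m+2)` paths of each variable strip; an edge from `v_{c_j}`
to the vertex at distance `j + 1` (`1`-indexed: distance `j`) from `v_{x_i}`
on the upper (resp. lower) path of `x_i` for each non-negated (resp. negated)
literal of `c_j`; the path `v_{c_1}^g - ⋯ - v_{c_m}^g`; and edges from
`v_{c_m}^g` to every `v_{x_i}`. -/
def phiRel {n m : ℕ} (sat : ThreeSat n m) : PhiV n m → PhiV n m → Prop
  | PhiV.vx i, PhiV.mid i' _ k => i = i' ∧ (k : ℕ) = 0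
  | PhiV.mid i s k, PhiV.mid i' s' k' => i = i' ∧ s = s' ∧ (k' : ℕ) = (k : ℕ) + 1
  | PhiV.mid i _ k, PhiV.vxg i' => i = i' ∧ (k : ℕ) = m
  | PhiV.vc j, PhiV.mid i s k => (∃ l, sat.lit j l = (i, s)) ∧ (k : ℕ) = (j : ℕ)
  | PhiV.vcg j, PhiV.vcg j' => (j' : ℕ) = (j : ℕ) + 1
  | PhiV.vcg j, PhiV.vx _ => (j : ℕ) + 1 = m
  | _, _ => False

/-- The graph of the reduced MPP instance `Φ`. -/
def phiGraph {n m : ℕ} (sat : ThreeSat n m) : SimpleGraph (PhiV n m) :=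
  SimpleGraph.fromRel (phiRel sat)

/-- Start configuration of `Φ`: the variable robot `r_{x_i}` (index
`Sum.inl i`) starts at `v_{x_i}`; the clause robot `r_{c_j}` (index
`Sum.inr j`) starts at `v_{c_j}`. -/
def phiStart {n m : ℕ} : Fin n ⊕ Fin m → PhiV n m :=
  Sum.elim PhiV.vx PhiV.vc

/-- Goal configuration of `Φ`: `r_{x_i}` must reach `v_{x_i}^g` and `r_{c_j}`
must reach `v_{c_j}^g`. -/
def phiGoal {n m : ℕ} : Fin n ⊕ Fin m → PhiV n m :=
  Sum.elim PhiV.vxg PhiV.vcg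

end MPPFormal

namespace MPPFormal

/-- A solution of the two-group (interchangeable-robot) version `Φ'` of the
reduced instance: the variable robots form one group with goal set
`{v_{x_1}^g, …, v_{x_n}^g}` and the clause robots form another group with
goal set `{v_{c_1}^g, …, v_{c_m}^g}`.  `g` records the final goal vertex of
each robot: within each group the robots occupy all goal vertices of the
group, i.e. `g` is given by permutations of the two groups' goal sets, and
`p` is an ordinary (collision-free, feasible) solution for the goal
configuration `g`. -/
def TwoGroupSolution {n m : ℕ} (sat : ThreeSat n m)
    (p : Fin n ⊕ Fin m → ℕ → PhiV n m) (g : Fin n ⊕ Fin m → PhiV n m) : Prop :=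
  (∃ (φ : Equiv.Perm (Fin n)) (ψ : Equiv.Perm (Fin m)),
      g = Sum.elim (fun i => PhiV.vxg (φ i)) fun j => PhiV.vcg (ψ j)) ∧
    IsSolution (phiGraph sat) phiStart g p

end MPPFormal

namespace MPPFormal

variable {n m : ℕ}

def nuV : PhiV n m → ℤ
  | .vx _ => 0
  | .vxg _ => (m : ℤ) + 2
  | .mid _ _ k => (k : ℤ) + 1
  | .vc j => (j : ℤ) + 1
  | .vcg j => (j : ℤ) - ((m : ℤ) - 1)

def muV : PhiV n m → ℤ
  | .vx _ => -2
  | .vxg _ => (m : ℤ)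
  | .mid _ _ k => (k : ℤ) - 1
  | .vc j => (j : ℤ)
  | .vcg j => (j : ℤ) - ((m : ℤ) + 2)

lemma nu_rel {sat : ThreeSat n m} {u v : PhiV n m} (h : phiRel sat u v) :
    |nuV u - nuV v| ≤ 1 := by
  cases u <;> cases v <;> simp [phiRel, nuV, abs_le] at h ⊢ <;> omega

lemma mu_rel {sat : ThreeSat n m} {u v : PhiV n m} (h : phiRel sat u v) :
    |muV u - muV v| ≤ 1 := by
  cases u <;> cases v <;> simp [phiRel, muV, abs_le] at h ⊢ <;> omega

lemma nu_adj {sat : ThreeSat n m} {u v : PhiV n m} (h : (phiGraph sat).Adj u v) :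
    |nuV u - nuV v| ≤ 1 := by
  rcases h with ⟨-, h | h⟩
  · exact nu_rel h
  · rw [abs_sub_comm]; exact nu_rel h

lemma mu_adj {sat : ThreeSat n m} {u v : PhiV n m} (h : (phiGraph sat).Adj u v) :
    |muV u - muV v| ≤ 1 := by
  rcases h with ⟨-, h | h⟩
  · exact mu_rel h
  · rw [abs_sub_comm]; exact mu_rel h


lemma pot_bound {V : Type} (f : V → ℤ) (G : SimpleGraph V)
    (hf : ∀ u v, G.Adj u v → |f u - f v| ≤ 1)
    (p : ℕ → V) (hp : ∀ t, G.Adj (p t) (p (t + 1)) ∨ p t = p (t + 1)) :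
    ∀ a b : ℕ, a ≤ b → |f (p b) - f (p a)| ≤ (b : ℤ) - a := by
  intro a b hab
  induction b, hab using Nat.le_induction with
  | base => simp
  | succ b hb ih =>
    have h1 : |f (p (b + 1)) - f (p b)| ≤ 1 := by
      rcases hp b with h | h
      · rw [abs_sub_comm]; exact hf _ _ h
      · simp [h]
    have h2 := abs_sub_le (f (p (b + 1))) (f (p b)) (f (p a))
    push_cast
    omega


lemma fromRel_cases {sat : ThreeSat n m} {u v : PhiV n m}
    (h : (phiGraph sat).Adj u v) : phiRel sat u v ∨ phiRel sat v u := h.2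

lemma forced_vx {sat : ThreeSat n m} {i : Fin n} {w : PhiV n m}
    (h : (phiGraph sat).Adj (PhiV.vx i) w) (hw : nuV w = 1) :
    ∃ (s : Bool) (h0 : 0 < m + 1), w = PhiV.mid i s ⟨0, h0⟩ := by
  rcases fromRel_cases h with h' | h' <;> cases w <;>
    simp_all [phiRel, nuV, Fin.ext_iff, -Fin.val_eq_zero_iff] <;> omega

lemma forced_up {sat : ThreeSat n m} {i : Fin n} {s : Bool} {k : Fin (m+1)} {w : PhiV n m}
    (h : (phiGraph sat).Adj (PhiV.mid i s k) w) (hw : nuV w = (k : ℤ) + 2) :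
    (∃ h', w = PhiV.mid i s ⟨(k : ℕ) + 1, h'⟩) ∨ ((k : ℕ) = m ∧ w = PhiV.vxg i) := by
  rcases fromRel_cases h with h' | h' <;> cases w <;>
    simp_all [phiRel, nuV, Fin.ext_iff, -Fin.val_eq_zero_iff] <;> omega

set_option maxRecDepth 4000 in
lemma mid_congr {i : Fin n} {s : Bool} {a b : Fin (m+1)} (h : (a : ℕ) = (b : ℕ)) :
    PhiV.mid (n := n) i s a = PhiV.mid i s b :=
  congrArg (PhiV.mid i s) (Fin.ext h)

lemma vcg_congr {a b : Fin m} (h : (a : ℕ) = (b : ℕ)) :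
    PhiV.vcg (n := n) a = PhiV.vcg b :=
  congrArg PhiV.vcg (Fin.ext h)

lemma forced_down {sat : ThreeSat n m} {i : Fin n} {s : Bool} {k : Fin (m+1)} {w : PhiV n m}
    (h : (phiGraph sat).Adj (PhiV.mid i s k) w) (hk1 : 1 ≤ (k : ℕ))
    (hw : muV w = (k : ℤ) - 2) :
    ∃ h', w = PhiV.mid i s ⟨(k : ℕ) - 1, h'⟩ := by
  rcases fromRel_cases h with h' | h' <;> cases w
  case inl.vx => exact False.elim h'
  case inl.vxg =>
    obtain ⟨rfl, hk⟩ := h'; simp only [muV] at hw; omega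
  case inl.mid =>
    obtain ⟨rfl, rfl, hk⟩ := h'; simp only [muV] at hw; omega
  case inl.vc => exact False.elim h'
  case inl.vcg => exact False.elim h'
  case inr.vx =>
    obtain ⟨rfl, hk⟩ := h'; omega
  case inr.vxg => exact False.elim h'
  case inr.mid =>
    obtain ⟨rfl, rfl, hk⟩ := h'
    exact ⟨by omega, (mid_congr (by simp; omega)).symm⟩
  case inr.vc =>
    obtain ⟨-, hk⟩ := h'; simp only [muV] at hw; omega
  case inr.vcg => exact False.elim h'

lemma forced_vc {sat : ThreeSat n m} {j : Fin m} {w : PhiV n m}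
    (h : (phiGraph sat).Adj (PhiV.vc j) w) :
    ∃ (l : Fin 3) (hj : (j : ℕ) < m + 1),
      w = PhiV.mid (sat.lit j l).1 (sat.lit j l).2 ⟨(j : ℕ), hj⟩ := by
  rcases fromRel_cases h with h' | h' <;> cases w
  case inl.vx => exact False.elim h'
  case inl.vxg => exact False.elim h'
  case inl.mid =>
    obtain ⟨⟨l, hl⟩, hk⟩ := h'
    refine ⟨l, by omega, ?_⟩
    rw [hl]
    exact mid_congr (by simp [hk])
  case inl.vc => exact False.elim h'
  case inl.vcg => exact False.elim h'
  case inr.vx => exact False.elim h'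
  case inr.vxg => exact False.elim h'
  case inr.mid => exact False.elim h'
  case inr.vc => exact False.elim h'
  case inr.vcg => exact False.elim h'

lemma arrivalTime_mem {V : Type} {p : ℕ → V} {gv : V} (hex : ∃ t, p t = gv) :
    p (arrivalTime gv p) = gv :=
  Nat.sInf_mem hex

lemma var_lb {sat : ThreeSat n m} {p : ℕ → PhiV n m} {i i' : Fin n}
    (hfeas : FeasiblePath (phiGraph sat) (PhiV.vx i) (PhiV.vxg i') p) :
    m + 2 ≤ arrivalTime (PhiV.vxg i') p := by
  obtain ⟨h0, hex, hstay, hstep⟩ := hfeas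
  have hpA := arrivalTime_mem hex
  have b1 := pot_bound nuV _ (fun u v h => nu_adj h) p hstep 0
    (arrivalTime (PhiV.vxg i') p) (Nat.zero_le _)
  rw [h0, hpA] at b1
  simp only [nuV] at b1
  rw [abs_le] at b1
  omega

lemma clause_lb {sat : ThreeSat n m} {p : ℕ → PhiV n m} {j j' : Fin m}
    (hfeas : FeasiblePath (phiGraph sat) (PhiV.vc j) (PhiV.vcg j') p) :
    (m : ℤ) + 2 + (j : ℤ) - (j' : ℤ) ≤ (arrivalTime (PhiV.vcg j') p : ℤ) := by
  obtain ⟨h0, hex, hstay, hstep⟩ := hfeas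
  have hpA := arrivalTime_mem hex
  have b1 := pot_bound muV _ (fun u v h => mu_adj h) p hstep 0
    (arrivalTime (PhiV.vcg j') p) (Nat.zero_le _)
  rw [h0, hpA] at b1
  simp only [muV] at b1
  rw [abs_le] at b1
  omega

lemma variable_trace {sat : ThreeSat n m} {p : ℕ → PhiV n m} {i i' : Fin n}
    (hfeas : FeasiblePath (phiGraph sat) (PhiV.vx i) (PhiV.vxg i') p)
    (hA : arrivalTime (PhiV.vxg i') p ≤ m + 2) :
    ∃ s : Bool, ∀ t, 1 ≤ t → t ≤ m + 1 →
      ∃ hk, p t = PhiV.mid i s ⟨t - 1, hk⟩ := by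
  obtain ⟨h0, hex, hstay, hstep⟩ := hfeas
  have pm2 : p (m + 2) = PhiV.vxg i' := hstay _ hA
  have hnu : ∀ t, t ≤ m + 2 → nuV (p t) = t := by
    intro t ht
    have b1 := pot_bound nuV _ (fun u v h => nu_adj h) p hstep 0 t (Nat.zero_le _)
    have b2 := pot_bound nuV _ (fun u v h => nu_adj h) p hstep t (m + 2) ht
    rw [h0] at b1; rw [pm2] at b2
    simp only [nuV] at b1 b2 ⊢
    rw [abs_le] at b1 b2
    push_cast at b1 b2 ⊢
    omega
  have hadj : ∀ t, t < m + 2 → (phiGraph sat).Adj (p t) (p (t + 1)) := by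
    intro t ht
    rcases hstep t with h | h
    · exact h
    · exfalso
      have e1 := hnu t (by omega)
      have e2 := hnu (t + 1) (by omega)
      rw [h] at e1; omega
  have h1 : ∃ (s : Bool) (hk : 0 < m + 1), p 1 = PhiV.mid i s ⟨0, hk⟩ := by
    have ha := hadj 0 (by omega)
    rw [h0] at ha
    exact forced_vx ha (by have := hnu 1 (by omega); simpa using this)
  obtain ⟨s, hk0, h1⟩ := h1
  refine ⟨s, ?_⟩
  intro t h1t
  induction t, h1t using Nat.le_induction with
  | base => intro _; exact ⟨hk0, h1⟩
  | succ t ht ih =>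
    intro h2
    obtain ⟨hk, hpt⟩ := ih (by omega)
    have hadjt := hadj t (by omega)
    rw [hpt] at hadjt
    have hnut : nuV (p (t + 1)) = ((⟨t - 1, hk⟩ : Fin (m + 1)) : ℤ) + 2 := by
      have := hnu (t + 1) (by omega)
      simp only [Fin.val_mk]
      push_cast
      omega
    rcases forced_up hadjt hnut with ⟨h', hw⟩ | ⟨hkm, -⟩
    · refine ⟨by omega, ?_⟩
      rw [hw]
      exact mid_congr (by simp; omega)
    · simp only [Fin.val_mk] at hkm; omega

lemma clause_trace {sat : ThreeSat n m} {p : ℕ → PhiV n m} {j j' : Fin m}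
    (hfeas : FeasiblePath (phiGraph sat) (PhiV.vc j) (PhiV.vcg j') p)
    (hA : (arrivalTime (PhiV.vcg j') p : ℤ) ≤ (m : ℤ) + 2 + (j : ℤ) - (j' : ℤ)) :
    ∃ l : Fin 3, ∀ t, 1 ≤ t → t ≤ (j : ℕ) + 1 →
      ∃ hk, p t = PhiV.mid (sat.lit j l).1 (sat.lit j l).2 ⟨(j : ℕ) + 1 - t, hk⟩ := by
  have lbA := clause_lb hfeas
  obtain ⟨h0, hex, hstay, hstep⟩ := hfeas
  set A := arrivalTime (PhiV.vcg j') p with hAdef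
  have hpA : p A = PhiV.vcg j' := arrivalTime_mem hex
  have hAz : (A : ℤ) = (m : ℤ) + 2 + (j : ℤ) - (j' : ℤ) := le_antisymm hA lbA
  have hjA : (j : ℕ) + 1 < A := by
    have := j'.isLt
    omega
  have hmu : ∀ t, t ≤ A → muV (p t) = (j : ℤ) - t := by
    intro t ht
    have b1 := pot_bound muV _ (fun u v h => mu_adj h) p hstep 0 t (Nat.zero_le _)
    have b2 := pot_bound muV _ (fun u v h => mu_adj h) p hstep t A ht
    rw [h0] at b1; rw [hpA] at b2
    simp only [muV] at b1 b2 ⊢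
    rw [abs_le] at b1 b2
    push_cast at b1 b2 ⊢
    omega
  have hadj : ∀ t, t < A → (phiGraph sat).Adj (p t) (p (t + 1)) := by
    intro t ht
    rcases hstep t with h | h
    · exact h
    · exfalso
      have e1 := hmu t (by omega)
      have e2 := hmu (t + 1) (by omega)
      rw [h] at e1; omega
  have h1 : ∃ (l : Fin 3) (hj : (j : ℕ) < m + 1),
      p 1 = PhiV.mid (sat.lit j l).1 (sat.lit j l).2 ⟨(j : ℕ), hj⟩ := by
    have ha := hadj 0 (by omega)
    rw [h0] at ha
    exact forced_vc ha
  obtain ⟨l, hj0, h1⟩ := h1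
  refine ⟨l, ?_⟩
  intro t h1t
  induction t, h1t using Nat.le_induction with
  | base =>
    intro _
    exact ⟨by omega, by rw [h1]; exact mid_congr (by simp)⟩
  | succ t ht ih =>
    intro h2
    obtain ⟨hk, hpt⟩ := ih (by omega)
    have hadjt := hadj t (by omega)
    rw [hpt] at hadjt
    have hmut : muV (p (t + 1)) = ((⟨(j : ℕ) + 1 - t, hk⟩ : Fin (m + 1)) : ℤ) - 2 := by
      have := hmu (t + 1) (by omega)
      simp only [Fin.val_mk]
      push_cast
      omega
    obtain ⟨h', hw⟩ := forced_down hadjt (by simp only [Fin.val_mk]; omega) hmut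
    refine ⟨by omega, ?_⟩
    rw [hw]
    exact mid_congr (by simp; omega)

lemma tight_satisfiable {sat : ThreeSat n m}
    {p : Fin n ⊕ Fin m → ℕ → PhiV n m} {φ : Equiv.Perm (Fin n)} {ψ : Equiv.Perm (Fin m)}
    (hsol : IsSolution (phiGraph sat) phiStart
      (Sum.elim (fun i => PhiV.vxg (φ i)) fun j => PhiV.vcg (ψ j)) p)
    (hvar : ∀ i, arrivalTime (PhiV.vxg (φ i)) (p (Sum.inl i)) ≤ m + 2)
    (hcl : ∀ j, (arrivalTime (PhiV.vcg (ψ j)) (p (Sum.inr j)) : ℤ) ≤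
      (m : ℤ) + 2 + (j : ℤ) - ((ψ j : Fin m) : ℤ)) :
    sat.Satisfiable := by
  obtain ⟨hfeas, hpair⟩ := hsol
  have hvt : ∀ i : Fin n, ∃ s : Bool, ∀ t, 1 ≤ t → t ≤ m + 1 →
      ∃ hk, p (Sum.inl i) t = PhiV.mid i s ⟨t - 1, hk⟩ := by
    intro i
    exact variable_trace (by simpa [phiStart] using hfeas (Sum.inl i)) (hvar i)
  choose sv hsv using hvt
  refine ⟨fun i => !(sv i), ?_⟩
  intro j
  obtain ⟨l, hl⟩ := clause_trace (p := p (Sum.inr j))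
    (by simpa [phiStart] using hfeas (Sum.inr j)) (hcl j)
  refine ⟨l, ?_⟩
  by_contra hne
  have hss : (sat.lit j l).2 = sv (sat.lit j l).1 := by
    cases h1 : sv (sat.lit j l).1 <;> cases h2 : (sat.lit j l).2 <;> simp_all
  have hnc := hpair (show (Sum.inl (sat.lit j l).1 : Fin n ⊕ Fin m) ≠ Sum.inr j by simp)
  apply hnc
  have hjm := j.isLt
  rcases Nat.even_or_odd (j : ℕ) with ⟨c, hc⟩ | ⟨c, hc⟩
  · left
    refine ⟨c + 1, ?_⟩
    obtain ⟨hk1, e1⟩ := hsv (sat.lit j l).1 (c + 1) (by omega) (by omega)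
    obtain ⟨hk2, e2⟩ := hl (c + 1) (by omega) (by omega)
    rw [e1, e2, hss]
    exact mid_congr (by simp; omega)
  · right
    refine ⟨c + 1, ?_, ?_, ?_⟩
    · obtain ⟨hk1, e1⟩ := hsv (sat.lit j l).1 (c + 1) (by omega) (by omega)
      obtain ⟨hk2, e2⟩ := hl (c + 2) (by omega) (by omega)
      rw [e1, e2, hss]
      exact mid_congr (by simp; omega)
    · obtain ⟨hk1, e1⟩ := hsv (sat.lit j l).1 (c + 2) (by omega) (by omega)
      obtain ⟨hk2, e2⟩ := hl (c + 1) (by omega) (by omega)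
      rw [e1, e2, hss]
      exact mid_congr (by simp; omega)
    · obtain ⟨hk1, e1⟩ := hsv (sat.lit j l).1 (c + 1) (by omega) (by omega)
      obtain ⟨hk2, e2⟩ := hsv (sat.lit j l).1 (c + 2) (by omega) (by omega)
      rw [e1, e2]
      simp [Fin.ext_iff]

lemma perm_eq_of_le {ψ : Equiv.Perm (Fin m)} (h : ∀ j : Fin m, (j : ℕ) ≤ ((ψ j : Fin m) : ℕ)) :
    ∀ j, ψ j = j := by
  have hsum : (∑ j : Fin m, ((j : ℕ))) = ∑ j : Fin m, (((ψ j : Fin m) : ℕ)) :=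
    (Equiv.sum_comp ψ (fun j : Fin m => (j : ℕ))).symm
  have hpt := (Finset.sum_eq_sum_iff_of_le (fun i _ => h i)).mp hsum
  intro j
  exact Fin.ext ((hpt j (Finset.mem_univ j)).symm)

lemma makespan_case {sat : ThreeSat n m}
    {p : Fin n ⊕ Fin m → ℕ → PhiV n m} {φ : Equiv.Perm (Fin n)} {ψ : Equiv.Perm (Fin m)}
    (hsol : IsSolution (phiGraph sat) phiStart
      (Sum.elim (fun i => PhiV.vxg (φ i)) fun j => PhiV.vcg (ψ j)) p)
    (hms : makespan (Sum.elim (fun i => PhiV.vxg (φ i)) fun j => PhiV.vcg (ψ j)) p ≤ m + 2) :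
    sat.Satisfiable := by
  rw [makespan, Finset.sup_le_iff] at hms
  have harr : ∀ r, arrivalTime
      ((Sum.elim (fun i => PhiV.vxg (φ i)) fun j => PhiV.vcg (ψ j)) r) (p r) ≤ m + 2 :=
    fun r => hms r (Finset.mem_univ r)
  have hpsi : ∀ j, ψ j = j := by
    apply perm_eq_of_le
    intro j
    have h1 := clause_lb (j := j) (j' := ψ j)
      (by simpa [phiStart] using hsol.1 (Sum.inr j))
    have h2 := harr (Sum.inr j)
    simp only [Sum.elim_inr] at h2
    omega
  apply tight_satisfiable hsol
  · intro i
    simpa using harr (Sum.inl i)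
  · intro j
    have h2 := harr (Sum.inr j)
    simp only [Sum.elim_inr] at h2
    rw [hpsi j] at h2 ⊢
    omega

lemma total_case {sat : ThreeSat n m}
    {p : Fin n ⊕ Fin m → ℕ → PhiV n m} {φ : Equiv.Perm (Fin n)} {ψ : Equiv.Perm (Fin m)}
    (hsol : IsSolution (phiGraph sat) phiStart
      (Sum.elim (fun i => PhiV.vxg (φ i)) fun j => PhiV.vcg (ψ j)) p)
    (htt : totalTime (Sum.elim (fun i => PhiV.vxg (φ i)) fun j => PhiV.vcg (ψ j)) p
      ≤ (n + m) * (m + 2)) :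
    sat.Satisfiable := by
  classical
  set F : Fin n ⊕ Fin m → ℤ := fun r => (arrivalTime
      ((Sum.elim (fun i => PhiV.vxg (φ i)) fun j => PhiV.vcg (ψ j)) r) (p r) : ℤ) with hF
  set L : Fin n ⊕ Fin m → ℤ :=
    Sum.elim (fun _ => (m : ℤ) + 2) (fun j => (m : ℤ) + 2 + (j : ℤ) - ((ψ j : Fin m) : ℤ)) with hL
  have hle : ∀ r ∈ Finset.univ, L r ≤ F r := by
    rintro (i | j) -
    · have := var_lb (i := i) (i' := φ i) (by simpa [phiStart] using hsol.1 (Sum.inl i))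
      simp only [hF, hL, Sum.elim_inl]
      exact_mod_cast this
    · have := clause_lb (j := j) (j' := ψ j) (by simpa [phiStart] using hsol.1 (Sum.inr j))
      simp only [hF, hL, Sum.elim_inr]
      exact this
  have hsumL : ∑ r, L r = ((n : ℤ) + m) * ((m : ℤ) + 2) := by
    rw [hL, Fintype.sum_sum_type]
    simp only [Sum.elim_inl, Sum.elim_inr]
    have h1 : ∑ j : Fin m, (((ψ j : Fin m) : ℕ) : ℤ) = ∑ j : Fin m, ((j : ℕ) : ℤ) :=
      Equiv.sum_comp ψ (fun j : Fin m => ((j : ℕ) : ℤ))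
    rw [Finset.sum_sub_distrib, h1]
    simp only [Finset.sum_add_distrib, Finset.sum_const, Finset.card_univ,
      Fintype.card_fin, nsmul_eq_mul]
    push_cast
    ring
  have hsumF : ∑ r, F r ≤ ((n : ℤ) + m) * ((m : ℤ) + 2) := by
    have h2 : ((totalTime (Sum.elim (fun i => PhiV.vxg (φ i)) fun j => PhiV.vcg (ψ j)) p : ℕ) : ℤ)
        ≤ ((n : ℤ) + m) * ((m : ℤ) + 2) := by exact_mod_cast htt
    rw [totalTime] at h2
    push_cast at h2
    exact h2
  have heq : ∑ r, L r = ∑ r, F r :=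
    le_antisymm (Finset.sum_le_sum hle) (by rw [hsumL]; exact hsumF)
  have hpt := (Finset.sum_eq_sum_iff_of_le hle).mp heq
  apply tight_satisfiable hsol
  · intro i
    have := (hpt (Sum.inl i) (Finset.mem_univ _)).symm
    simp only [hF, hL, Sum.elim_inl] at this
    omega
  · intro j
    have := (hpt (Sum.inr j) (Finset.mem_univ _)).symm
    simp only [hF, hL, Sum.elim_inr] at this
    omega

def varPath (i : Fin n) (s : Bool) : ℕ → PhiV n m := fun t =>
  if t = 0 then PhiV.vx i
  else if h : t ≤ m + 1 then PhiV.mid i s ⟨t - 1, by omega⟩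
  else PhiV.vxg i

def clPath (j : Fin m) (i : Fin n) (s : Bool) : ℕ → PhiV n m := fun t =>
  if t = 0 then PhiV.vc j
  else if h : t ≤ (j : ℕ) + 1 then PhiV.mid i s ⟨(j : ℕ) + 1 - t, by have := j.isLt; omega⟩
  else if h2 : t ≤ (j : ℕ) + 2 then PhiV.vx i
  else if h3 : t ≤ m + 2 then PhiV.vcg ⟨(j : ℕ) + (m + 2 - t), by have := j.isLt; omega⟩
  else PhiV.vcg j

lemma varPath_goal (i : Fin n) (s : Bool) (t : ℕ) :
    varPath (n := n) (m := m) i s t = PhiV.vxg i ↔ m + 2 ≤ t := by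
  unfold varPath
  split_ifs <;> simp <;> omega

lemma clPath_goal (j : Fin m) (i : Fin n) (s : Bool) (t : ℕ) :
    clPath (n := n) (m := m) j i s t = PhiV.vcg j ↔ m + 2 ≤ t := by
  unfold clPath
  split_ifs <;> simp [Fin.ext_iff] <;> omega

lemma arrival_char {V : Type} (p : ℕ → V) (gv : V) (T : ℕ)
    (h : ∀ t, p t = gv ↔ T ≤ t) : arrivalTime gv p = T := by
  have hex : ∃ t, p t = gv := ⟨T, (h T).2 le_rfl⟩
  have h1 : arrivalTime gv p ≤ T := Nat.sInf_le ((h T).2 le_rfl)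
  have h2 : p (arrivalTime gv p) = gv := Nat.sInf_mem hex
  exact le_antisymm h1 ((h _).1 h2)

lemma varPath_feasible (sat : ThreeSat n m) (i : Fin n) (s : Bool) :
    FeasiblePath (phiGraph sat) (PhiV.vx i) (PhiV.vxg i) (varPath i s) := by
  have hgoal := varPath_goal (n := n) (m := m) i s
  have harr := arrival_char _ _ _ hgoal
  refine ⟨by simp [varPath], ⟨m + 2, (hgoal _).2 le_rfl⟩, ?_, ?_⟩
  · intro t ht
    exact (hgoal t).2 (by omega)
  · intro t
    rcases eq_or_ne t 0 with rfl | h0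
    · left
      have e1 : varPath (n := n) (m := m) i s 0 = PhiV.vx i := by simp [varPath]
      have e2 : varPath (n := n) (m := m) i s 1 = PhiV.mid i s ⟨0, by omega⟩ := by
        simp [varPath]
      rw [e1, e2]
      exact ⟨by simp, Or.inl ⟨rfl, rfl⟩⟩
    · by_cases h1 : t ≤ m
      · left
        have e1 : varPath (n := n) (m := m) i s t = PhiV.mid i s ⟨t - 1, by omega⟩ := by
          unfold varPath
          rw [if_neg h0, dif_pos (by omega)]
        have e2 : varPath (n := n) (m := m) i s (t + 1) = PhiV.mid i s ⟨t, by omega⟩ := by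
          unfold varPath
          rw [if_neg (by omega), dif_pos (by omega)]
          exact mid_congr (by simp)
        rw [e1, e2]
        refine ⟨by simp [Fin.ext_iff]; omega, Or.inl ⟨rfl, rfl, by simp; omega⟩⟩
      · by_cases h2 : t = m + 1
        · left
          subst h2
          have e1 : varPath (n := n) (m := m) i s (m + 1) = PhiV.mid i s ⟨m, by omega⟩ := by
            unfold varPath
            rw [if_neg (by omega), dif_pos (by omega)]
            exact mid_congr (by simp)
          have e2 : varPath (n := n) (m := m) i s (m + 2) = PhiV.vxg i := (hgoal _).2 le_rfl
          rw [e1, e2]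
          exact ⟨by simp, Or.inl ⟨rfl, rfl⟩⟩
        · right
          rw [(hgoal t).2 (by omega), (hgoal (t + 1)).2 (by omega)]

lemma clPath_feasible (sat : ThreeSat n m) (j : Fin m) (i : Fin n) (s : Bool)
    (hlit : ∃ l, sat.lit j l = (i, s)) :
    FeasiblePath (phiGraph sat) (PhiV.vc j) (PhiV.vcg j) (clPath j i s) := by
  have hjm := j.isLt
  have hgoal := clPath_goal (n := n) (m := m) j i s
  have harr := arrival_char _ _ _ hgoal
  refine ⟨by simp [clPath], ⟨m + 2, (hgoal _).2 le_rfl⟩, ?_, ?_⟩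
  · intro t ht
    exact (hgoal t).2 (by omega)
  · intro t
    rcases eq_or_ne t 0 with rfl | h0
    · left
      have e1 : clPath (n := n) (m := m) j i s 0 = PhiV.vc j := by simp [clPath]
      have e2 : clPath (n := n) (m := m) j i s 1 = PhiV.mid i s ⟨(j : ℕ), by omega⟩ := by
        unfold clPath
        rw [if_neg (by omega), dif_pos (by omega)]
        exact mid_congr (by simp)
      rw [e1, e2]
      exact ⟨by simp, Or.inl ⟨hlit, rfl⟩⟩
    · by_cases h1 : t ≤ (j : ℕ)
      · left
        have e1 : clPath (n := n) (m := m) j i s t = PhiV.mid i s ⟨(j : ℕ) + 1 - t, by omega⟩ := by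
          unfold clPath
          rw [if_neg h0, dif_pos (by omega)]
        have e2 : clPath (n := n) (m := m) j i s (t + 1)
            = PhiV.mid i s ⟨(j : ℕ) - t, by omega⟩ := by
          unfold clPath
          rw [if_neg (by omega), dif_pos (by omega)]
          exact mid_congr (by first | omega | (simp only [Fin.val_mk]; omega))
        rw [e1, e2]
        refine ⟨by simp [Fin.ext_iff]; omega, Or.inr ⟨rfl, rfl, by first | omega | (simp only [Fin.val_mk]; omega)⟩⟩
      · by_cases h2 : t = (j : ℕ) + 1
        · left
          have e1 : clPath (n := n) (m := m) j i s t = PhiV.mid i s ⟨0, by omega⟩ := by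
            unfold clPath
            rw [if_neg h0, dif_pos (by omega)]
            exact mid_congr (by simp; omega)
          have e2 : clPath (n := n) (m := m) j i s (t + 1) = PhiV.vx i := by
            unfold clPath
            rw [if_neg (by omega), dif_neg (by omega), dif_pos (by omega)]
          rw [e1, e2]
          exact ⟨by simp, Or.inr ⟨rfl, rfl⟩⟩
        · by_cases h3 : t = (j : ℕ) + 2
          · left
            have e1 : clPath (n := n) (m := m) j i s t = PhiV.vx i := by
              unfold clPath
              rw [if_neg h0, dif_neg (by omega), dif_pos (by omega)]
            have e2 : clPath (n := n) (m := m) j i s (t + 1)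
                = PhiV.vcg ⟨m - 1, by omega⟩ := by
              unfold clPath
              rw [if_neg (by omega), dif_neg (by omega), dif_neg (by omega),
                dif_pos (by omega)]
              exact vcg_congr (by first | omega | (simp only [Fin.val_mk]; omega))
            rw [e1, e2]
            exact ⟨by simp, Or.inr (by show (m - 1) + 1 = m; omega)⟩
          · by_cases h4 : t ≤ m + 1
            · left
              have e1 : clPath (n := n) (m := m) j i s t
                  = PhiV.vcg ⟨(j : ℕ) + (m + 2 - t), by omega⟩ := by
                unfold clPath
                rw [if_neg h0, dif_neg (by omega), dif_neg (by omega), dif_pos (by omega)]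
              have e2 : clPath (n := n) (m := m) j i s (t + 1)
                  = PhiV.vcg ⟨(j : ℕ) + (m + 1 - t), by omega⟩ := by
                unfold clPath
                rw [if_neg (by omega), dif_neg (by omega), dif_neg (by omega),
                  dif_pos (by omega)]
                exact vcg_congr (by first | omega | (simp only [Fin.val_mk]; omega))
              rw [e1, e2]
              refine ⟨by simp [Fin.ext_iff]; omega,
                Or.inr (by show (j : ℕ) + (m + 2 - t) = (j : ℕ) + (m + 1 - t) + 1; omega)⟩
            · right
              rw [(hgoal t).2 (by omega), (hgoal (t + 1)).2 (by omega)]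

lemma varPath_ne {i i' : Fin n} {s s' : Bool} (hne : i ≠ i') (t t' : ℕ) :
    varPath (n := n) (m := m) i s t ≠ varPath (n := n) (m := m) i' s' t' := by
  intro heq
  unfold varPath at heq
  split_ifs at heq <;> simp_all

lemma var_cl_ne {i i' : Fin n} {s s' : Bool} {j : Fin m}
    (hss : i = i' → s ≠ s') {t t' : ℕ} (hw1 : t' ≤ t + 1) (hw2 : t ≤ t' + 1) :
    varPath (n := n) (m := m) i s t ≠ clPath (n := n) (m := m) j i' s' t' := by
  intro heq
  unfold varPath clPath at heq
  split_ifs at heq <;> simp only [PhiV.vx.injEq, PhiV.mid.injEq, PhiV.vxg.injEq,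
    PhiV.vc.injEq, PhiV.vcg.injEq, reduceCtorEq] at heq <;>
    first
      | omega
      | exact heq
      | (obtain ⟨rfl, rfl, -⟩ := heq; exact hss rfl rfl)
      | (obtain ⟨rfl, -⟩ := heq; omega)

lemma cl_cl_ne {i i' : Fin n} {s s' : Bool} {j j' : Fin m}
    (hne : (j : ℕ) ≠ (j' : ℕ)) (t : ℕ) :
    clPath (n := n) (m := m) j i s t ≠ clPath (n := n) (m := m) j' i' s' t := by
  intro heq
  unfold clPath at heq
  split_ifs at heq <;> simp only [PhiV.vx.injEq, PhiV.mid.injEq, PhiV.vxg.injEq,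
    PhiV.vc.injEq, PhiV.vcg.injEq, Fin.mk.injEq, Fin.ext_iff, reduceCtorEq] at heq <;>
    first
      | omega
      | (obtain ⟨-, -, h⟩ := heq; omega)
      | (obtain ⟨-, h⟩ := heq; omega)

lemma cl_cl_noswap {i i' : Fin n} {s s' : Bool} {j j' : Fin m}
    (hne : (j : ℕ) ≠ (j' : ℕ)) (t : ℕ)
    (h1 : clPath (n := n) (m := m) j i s t = clPath (n := n) (m := m) j' i' s' (t + 1))
    (h2 : clPath (n := n) (m := m) j i s (t + 1) = clPath (n := n) (m := m) j' i' s' t) :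
    False := by
  unfold clPath at h1 h2
  split_ifs at h1 h2 <;> simp only [PhiV.vx.injEq, PhiV.mid.injEq, PhiV.vxg.injEq,
    PhiV.vc.injEq, PhiV.vcg.injEq, Fin.mk.injEq, Fin.ext_iff, reduceCtorEq] at h1 h2 <;>
    first
      | omega
      | (obtain ⟨-, -, ha⟩ := h1; obtain ⟨-, -, hb⟩ := h2; omega)
      | (obtain ⟨-, -, ha⟩ := h1; omega)
      | (obtain ⟨-, -, hb⟩ := h2; omega)
      | (obtain ⟨-, ha⟩ := h1; obtain ⟨-, hb⟩ := h2; omega)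
      | (obtain ⟨-, ha⟩ := h1; omega)
      | (obtain ⟨-, hb⟩ := h2; omega)

lemma construction {sat : ThreeSat n m} {a : Fin n → Bool} (ha : sat.SatisfiedBy a) :
    ∃ (p : Fin n ⊕ Fin m → ℕ → PhiV n m) (g : Fin n ⊕ Fin m → PhiV n m),
      TwoGroupSolution sat p g ∧ makespan g p ≤ m + 2 ∧
        totalTime g p ≤ (n + m) * (m + 2) := by
  classical
  choose ch hch using ha
  refine ⟨Sum.elim (fun i => varPath i (!(a i)))
      (fun j => clPath j (sat.lit j (ch j)).1 (sat.lit j (ch j)).2),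
    Sum.elim PhiV.vxg PhiV.vcg, ⟨⟨Equiv.refl _, Equiv.refl _, rfl⟩, ?_, ?_⟩, ?_, ?_⟩
  · rintro (i | j)
    · exact varPath_feasible sat i _
    · exact clPath_feasible sat j _ _ ⟨ch j, rfl⟩
  · rintro (i | j) (i' | j') hne
    · have hne' : i ≠ i' := by simpa using hne
      rintro (⟨t, h⟩ | ⟨t, h1, -, -⟩)
      · exact varPath_ne hne' t t h
      · exact varPath_ne hne' t (t + 1) h1
    · rintro (⟨t, h⟩ | ⟨t, h1, -, -⟩)
      · simp only [Sum.elim_inl, Sum.elim_inr] at h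
        refine var_cl_ne ?_ (by omega) (by omega) h
        intro hii; rw [hii, ← hch j']; simp
      · simp only [Sum.elim_inl, Sum.elim_inr] at h1
        refine var_cl_ne ?_ (by omega) (by omega) h1
        intro hii; rw [hii, ← hch j']; simp
    · rintro (⟨t, h⟩ | ⟨t, h1, -, -⟩)
      · simp only [Sum.elim_inl, Sum.elim_inr] at h
        refine var_cl_ne ?_ (by omega) (by omega) h.symm
        intro hii; rw [hii, ← hch j]; simp
      · simp only [Sum.elim_inl, Sum.elim_inr] at h1
        refine var_cl_ne ?_ (by omega) (by omega) h1.symm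
        intro hii; rw [hii, ← hch j]; simp
    · have hne' : (j : ℕ) ≠ (j' : ℕ) := by
        simpa [Fin.ext_iff] using hne
      rintro (⟨t, h⟩ | ⟨t, h1, h2, -⟩)
      · exact cl_cl_ne hne' t h
      · exact cl_cl_noswap hne' t h1 h2
  · apply Finset.sup_le
    rintro (i | j) -
    · simp only [Sum.elim_inl]
      exact le_of_eq (arrival_char _ _ _ (varPath_goal i _))
    · simp only [Sum.elim_inr]
      exact le_of_eq (arrival_char _ _ _ (clPath_goal j _ _))
  · rw [totalTime]
    have hconst : ∀ r : Fin n ⊕ Fin m,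
        arrivalTime ((Sum.elim PhiV.vxg PhiV.vcg : Fin n ⊕ Fin m → PhiV n m) r)
          ((Sum.elim (fun i => varPath i (!(a i)))
            (fun j => clPath j (sat.lit j (ch j)).1 (sat.lit j (ch j)).2)) r) = m + 2 := by
      rintro (i | j)
      · exact arrival_char _ _ _ (varPath_goal i _)
      · exact arrival_char _ _ _ (clPath_goal j _ _)
    rw [Finset.sum_congr rfl (fun r _ => hconst r)]
    simp [Finset.card_univ]

/-- The two-group (interchangeable-robot) version `Φ'` of the reduced MPP
instance admits a solution with makespan at most `m + 2` if and only if the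
3SAT instance is satisfiable, and it admits a solution with total arrival
time at most `(n + m)(m + 2)` if and only if the 3SAT instance is
satisfiable. -/
theorem twoGroup_optimal_iff_satisfiable {n m : ℕ} (hm : 0 < m)
    (sat : ThreeSat n m) :
    ((∃ (p : Fin n ⊕ Fin m → ℕ → PhiV n m) (g : Fin n ⊕ Fin m → PhiV n m),
        TwoGroupSolution sat p g ∧ makespan g p ≤ m + 2) ↔ sat.Satisfiable) ∧
    ((∃ (p : Fin n ⊕ Fin m → ℕ → PhiV n m) (g : Fin n ⊕ Fin m → PhiV n m),
        TwoGroupSolution sat p g ∧ totalTime g p ≤ (n + m) * (m + 2)) ↔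
      sat.Satisfiable) := by
  constructor
  · constructor
    · rintro ⟨p, g, ⟨⟨φ, ψ, rfl⟩, hsol⟩, hms⟩
      exact makespan_case hsol hms
    · intro hsat
      obtain ⟨a, ha⟩ := hsat
      obtain ⟨p, g, hs, h1, h2⟩ := construction ha
      exact ⟨p, g, hs, h1⟩
  · constructor
    · rintro ⟨p, g, ⟨⟨φ, ψ, rfl⟩, hsol⟩, htt⟩
      exact total_case hsol htt
    · intro hsat
      obtain ⟨a, ha⟩ := hsat
      obtain ⟨p, g, hs, h1, h2⟩ := construction ha
      exact ⟨p, g, hs, h2⟩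

end MPPFormal
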